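/- Assume the alternating-minimization framework, and assume in addition that L_f is γ-strongly convex for some γ > 0. Let (f̂, ĝ) be a joint minimizer and let (f_m, g_m), m ≥ 1, be alternating-minimization iterates. Then for every m ≥ 1, (1 + γ/2)‖f̂ − f_m‖² ≤ −⟨f̂ − f_m, ĝ − g_m⟩; consequently ‖f̂ − f_m‖ ≤ (2/(2 + γ))‖ĝ − g_m‖. (Key inequality in the proof of the paper's Theorem 3.) -/

import Mathlib

open RealInnerProductSpace Filter

private lemma limit_aux {c A : ℝ} (h : ∀ t : ℝ, 0 < t → t ≤ 1 → c * (1 - t) ≤ A) : c ≤ A := by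
  have h0 : Filter.Tendsto (fun n : ℕ => (1:ℝ) / (n + 1)) Filter.atTop (nhds 0) :=
    tendsto_one_div_add_atTop_nhds_zero_nat
  have htend : Filter.Tendsto (fun n : ℕ => c * (1 - 1 / ((n:ℝ) + 1))) Filter.atTop (nhds c) := by
    have h1 := (tendsto_const_nhds (x := (1:ℝ)) (f := Filter.atTop (α := ℕ))).sub h0
    have h2 := (tendsto_const_nhds (x := c) (f := Filter.atTop (α := ℕ))).mul h1
    simpa using h2
  refine le_of_tendsto htend ?_
  filter_upwards with n
  refine h _ (by positivity) ?_
  rw [div_le_one (by positivity)]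
  linarith [Nat.cast_nonneg (α := ℝ) n]

private lemma strong_min {H : Type*} [NormedAddCommGroup H] [InnerProductSpace ℝ H]
    (F : Set H) (hF : Convex ℝ F) (Q : H → ℝ) (c : ℝ)
    (hsc : ∀ x ∈ F, ∀ z ∈ F, ∀ t ∈ Set.Icc (0:ℝ) 1,
      Q (t • x + (1 - t) • z) ≤ t * Q x + (1 - t) * Q z - c * (t * (1 - t)) * ‖x - z‖ ^ 2)
    (m : H) (hm : m ∈ F) (hmin : ∀ x ∈ F, Q m ≤ Q x) (x : H) (hx : x ∈ F) :
    c * ‖x - m‖ ^ 2 ≤ Q x - Q m := by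
  refine limit_aux (fun t ht ht1 => ?_)
  have hmem : t • x + (1 - t) • m ∈ F := hF hx hm ht.le (by linarith) (by ring)
  have h1 := hmin _ hmem
  have h2 := hsc x hx m hm t ⟨ht.le, ht1⟩
  have h3 : c * (t * (1 - t)) * ‖x - m‖ ^ 2 ≤ t * (Q x - Q m) := by nlinarith
  nlinarith

private lemma norm_combo_sq {H : Type*} [NormedAddCommGroup H] [InnerProductSpace ℝ H]
    (u x z : H) (t : ℝ) :
    ‖u - (t • x + (1 - t) • z)‖ ^ 2
      = t * ‖u - x‖ ^ 2 + (1 - t) * ‖u - z‖ ^ 2 - t * (1 - t) * ‖x - z‖ ^ 2 := by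
  have h1 : u - (t • x + (1 - t) • z) = t • (u - x) + (1 - t) • (u - z) := by
    module
  rw [h1]
  have e : ∀ v : H, ‖v‖ ^ 2 = ⟪v, v⟫ := fun v => (real_inner_self_eq_norm_sq v).symm
  rw [e, e, e, e]
  simp only [inner_add_left, inner_add_right, inner_sub_left, inner_sub_right,
    real_inner_smul_left, real_inner_smul_right]
  rw [real_inner_comm z x, real_inner_comm z u, real_inner_comm x u]
  ring

/-- Key inequality in the proof of the paper's Theorem 3, under `γ`-strong convexity
of `Lf`. -/
theorem altMin_strongConvex_inequality
    {H : Type*} [NormedAddCommGroup H] [InnerProductSpace ℝ H]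
    (F G : Set H) (hF : Convex ℝ F) (hG : Convex ℝ G)
    (y : H) (Lf Lg : H → ℝ)
    (hLf : ConvexOn ℝ F Lf) (hLg : ConvexOn ℝ G Lg)
    (γ : ℝ) (hγ : 0 < γ)
    (hsc : (∀ x ∈ F, ∀ z ∈ F, ∀ t ∈ Set.Icc (0:ℝ) 1,
      Lf (t • x + (1 - t) • z) ≤ t * Lf x + (1 - t) * Lf z - γ / 2 * (t * (1 - t)) * ‖x - z‖ ^ 2))
    (fhat ghat : H) (hfhatF : fhat ∈ F) (hghatG : ghat ∈ G)
    (hmin : ∀ f ∈ F, ∀ g ∈ G,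
      ‖y - fhat - ghat‖ ^ 2 + Lf fhat + Lg ghat ≤ ‖y - f - g‖ ^ 2 + Lf f + Lg g)
    (f g : ℕ → H) (hf0 : f 0 ∈ F)
    (hfF : ∀ m, 1 ≤ m → f m ∈ F) (hgG : ∀ m, 1 ≤ m → g m ∈ G)
    (hgstep : ∀ m, 1 ≤ m → ∀ g' ∈ G,
      ‖y - f (m - 1) - g m‖ ^ 2 + Lg (g m) ≤ ‖y - f (m - 1) - g'‖ ^ 2 + Lg g')
    (hfstep : ∀ m, 1 ≤ m → ∀ f' ∈ F,
      ‖y - f m - g m‖ ^ 2 + Lf (f m) ≤ ‖y - f' - g m‖ ^ 2 + Lf f') :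
    ∀ m, 1 ≤ m →
      (1 + γ / 2) * ‖fhat - f m‖ ^ 2 ≤ -⟪fhat - f m, ghat - g m⟫
      ∧ ‖fhat - f m‖ ≤ 2 / (2 + γ) * ‖ghat - g m‖ := by
  intro m hm
  -- strong convexity of the aggregate objective, for any fixed g
  have hQ : ∀ (g0 : H), ∀ x ∈ F, ∀ z ∈ F, ∀ t ∈ Set.Icc (0:ℝ) 1,
      (fun v => ‖y - v - g0‖ ^ 2 + Lf v) (t • x + (1 - t) • z)
        ≤ t * ((fun v => ‖y - v - g0‖ ^ 2 + Lf v) x)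
          + (1 - t) * ((fun v => ‖y - v - g0‖ ^ 2 + Lf v) z)
          - (1 + γ / 2) * (t * (1 - t)) * ‖x - z‖ ^ 2 := by
    intro g0 x hx z hz t ht
    have hL := hsc x hx z hz t ht
    have hn : ‖y - (t • x + (1 - t) • z) - g0‖ ^ 2
        = t * ‖y - x - g0‖ ^ 2 + (1 - t) * ‖y - z - g0‖ ^ 2 - t * (1 - t) * ‖x - z‖ ^ 2 := by
      have := norm_combo_sq (y - g0) x z t
      have h1 : y - (t • x + (1 - t) • z) - g0 = (y - g0) - (t • x + (1 - t) • z) := by abel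
      have h2 : y - x - g0 = (y - g0) - x := by abel
      have h3 : y - z - g0 = (y - g0) - z := by abel
      rw [h1, h2, h3, this]
    simp only
    rw [hn]
    ring_nf
    ring_nf at hL
    linarith
  -- fhat minimizes Q_hat := ‖y - · - ghat‖² + Lf
  have hmin1 : ∀ x ∈ F, ‖y - fhat - ghat‖ ^ 2 + Lf fhat ≤ ‖y - x - ghat‖ ^ 2 + Lf x := by
    intro x hx
    have := hmin x hx ghat hghatG
    linarith
  have key1 := strong_min F hF (fun v => ‖y - v - ghat‖ ^ 2 + Lf v) (1 + γ / 2)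
    (hQ ghat) fhat hfhatF hmin1 (f m) (hfF m hm)
  -- f m minimizes Q_m := ‖y - · - g m‖² + Lf
  have key2 := strong_min F hF (fun v => ‖y - v - g m‖ ^ 2 + Lf v) (1 + γ / 2)
    (hQ (g m)) (f m) (hfF m hm) (fun x hx => hfstep m hm x hx) fhat hfhatF
  -- sum the two inequalities; the Lf terms cancel and the norm terms give an inner product
  have hid : (‖y - f m - ghat‖ ^ 2 - ‖y - fhat - ghat‖ ^ 2)
      + (‖y - fhat - g m‖ ^ 2 - ‖y - f m - g m‖ ^ 2)
      = -(2 * ⟪fhat - f m, ghat - g m⟫) := by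
    have e : ∀ v : H, ‖v‖ ^ 2 = ⟪v, v⟫ := fun v => (real_inner_self_eq_norm_sq v).symm
    rw [e, e, e, e]
    simp only [inner_sub_left, inner_sub_right]
    rw [real_inner_comm ghat (f m), real_inner_comm ghat fhat,
      real_inner_comm (g m) fhat, real_inner_comm (g m) (f m)]
    ring
  have hrev : ‖f m - fhat‖ = ‖fhat - f m‖ := by rw [norm_sub_rev]
  have hkey : (1 + γ / 2) * ‖fhat - f m‖ ^ 2 ≤ -⟪fhat - f m, ghat - g m⟫ := by
    rw [hrev] at key1
    nlinarith [key1, key2, hid]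
  refine ⟨hkey, ?_⟩
  have hcs : -⟪fhat - f m, ghat - g m⟫ ≤ ‖fhat - f m‖ * ‖ghat - g m‖ := by
    have := abs_real_inner_le_norm (fhat - f m) (ghat - g m)
    have := neg_abs_le (⟪fhat - f m, ghat - g m⟫)
    linarith
  have hd : (0:ℝ) ≤ ‖fhat - f m‖ := norm_nonneg _
  have he : (0:ℝ) ≤ ‖ghat - g m‖ := norm_nonneg _
  rcases eq_or_lt_of_le hd with h0 | h0
  · rw [← h0]; positivity
  · rw [div_mul_eq_mul_div, le_div_iff₀ (by linarith)]
    nlinarith
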